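/- arXiv:0809.1541 — 2 statements merged into one kernel-verified Lean document; each statement's English description precedes it below -/
import Mathlib

section
/- Let 𝒟 be a floor diagram of genus 0 and degree d, and let m : {1,…,n} → 𝒟 be a marking of type (α,β,γ,δ) where n = 2d−1+|α+β+2γ+2δ|. Then every vertex in Vert(𝒟) and every edge not adjacent to a source lies in the image of m. -/
open scoped Classical

/-- `ℕ^∞`: finitely supported sequences of nonnegative integers. -/
abbrev Vec : Type := ℕ →₀ ℕ

/-- `|α| = Σᵢ (α)ᵢ`. -/
def vabs (a : Vec) : ℕ := a.sum fun _ v => v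

/-- `Iα = Σᵢ i·(α)ᵢ`. -/
def vI (a : Vec) : ℕ := a.sum fun i v => i * v

/-- Partial sum `Σ_{j=1}^{k} (α)_j`. -/
def psum (a : Vec) (k : ℕ) : ℕ := ∑ j ∈ Finset.Icc 1 k, a j

/-- `I^α = Πᵢ i^{(α)_i}` as a rational number. -/
def Iexp (a : Vec) : ℚ := ∏ i ∈ a.support, (i : ℚ) ^ a i

/-- A weighted oriented graph: a list of oriented edges with positive weights. -/
structure WGraph (V : Type) where
  edges : List (V × V)
  weight : Fin edges.length → ℕ
  weight_pos : ∀ i, 0 < weight i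

namespace WGraph

variable {V V' : Type} [Fintype V] [Fintype V']

def tail (G : WGraph V) (i : Fin G.edges.length) : V := (G.edges.get i).1

def head (G : WGraph V) (i : Fin G.edges.length) : V := (G.edges.get i).2

def Adj (G : WGraph V) (u v : V) : Prop :=
  ∃ i, (G.tail i = u ∧ G.head i = v) ∨ (G.tail i = v ∧ G.head i = u)

def Connected (G : WGraph V) : Prop := ∀ u v : V, Relation.ReflTransGen G.Adj u v

/-- A tree: connected with Euler characteristic `#V - #E = 1`. -/
def IsTree (G : WGraph V) : Prop := G.Connected ∧ Fintype.card V = G.edges.length + 1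

/-- A source: all adjacent edges are outgoing. -/
def IsSource (G : WGraph V) (v : V) : Prop := ∀ i, G.head i ≠ v

/-- Divergence: sum of incoming weights minus sum of outgoing weights. -/
noncomputable def div (G : WGraph V) (v : V) : ℤ :=
  (∑ i, if G.head i = v then (G.weight i : ℤ) else 0)
    - ∑ i, if G.tail i = v then (G.weight i : ℤ) else 0

/-- Floor diagram of genus 0 and degree `d`. -/
def IsFloorDiagram (G : WGraph V) (d : ℕ) : Prop :=
  G.IsTree ∧ (∀ v, ¬ G.IsSource v → G.div v = 1) ∧
  (∀ v, G.IsSource v → ∃! i, G.tail i = v) ∧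
  (∑ v : V, if G.IsSource v then G.div v else 0) = -(d : ℤ)

/-- Edge adjacent to a source (`Edge^∞`). -/
def IsInfEdge (G : WGraph V) (i : Fin G.edges.length) : Prop :=
  G.IsSource (G.tail i) ∨ G.IsSource (G.head i)

/-- Adjacency between elements (vertices or edges) of the graph. -/
def ElemAdj (G : WGraph V) : V ⊕ Fin G.edges.length → V ⊕ Fin G.edges.length → Prop
  | Sum.inl v, Sum.inr e => G.tail e = v ∨ G.head e = v
  | Sum.inr e, Sum.inl v => G.tail e = v ∨ G.head e = v
  | _, _ => False

/-- One step of the natural partial order on an oriented tree. -/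
def Step (G : WGraph V) : V ⊕ Fin G.edges.length → V ⊕ Fin G.edges.length → Prop
  | Sum.inr e, Sum.inl v => G.head e = v
  | Sum.inl v, Sum.inr e => G.tail e = v
  | _, _ => False

/-- The natural (strict) partial order "greater than" on elements of an oriented tree. -/
def ElemGT (G : WGraph V) : V ⊕ Fin G.edges.length → V ⊕ Fin G.edges.length → Prop :=
  Relation.TransGen G.Step

end WGraph

/-- `n = 2d - 1 + |α+β+2γ+2δ|` where `d = Iα+Iβ+2Iγ+2Iδ`. -/
noncomputable def mn (α β γ δ : Vec) : ℕ :=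
  2 * (vI α + vI β + 2 * vI γ + 2 * vI δ) - 1 + vabs (α + β + 2 • γ + 2 • δ)

namespace WGraph

variable {V V' : Type} [Fintype V] [Fintype V']

/-- A marking of type `(α,β,γ,δ)` of a floor diagram, with marked points indexed by
`1,…,n`. -/
structure IsMarking (G : WGraph V) (α β γ δ : Vec)
    (m : ℕ → V ⊕ Fin G.edges.length) : Prop where
  floor : G.IsFloorDiagram (vI α + vI β + 2 * vI γ + 2 * vI δ)
  inj : Set.InjOn m (Set.Icc 1 (mn α β γ δ))
  mono : ∀ i ∈ Set.Icc 1 (mn α β γ δ), ∀ j ∈ Set.Icc 1 (mn α β γ δ),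
      G.ElemGT (m i) (m j) → j < i
  srcA : ∀ k, 1 ≤ k → ∀ i, psum α (k-1) + 1 ≤ i → i ≤ psum α k →
      ∃ v, m i = Sum.inl v ∧ G.IsSource v ∧ G.div v = -(k : ℤ)
  srcG : ∀ k, 1 ≤ k → ∀ i, vabs α + 2 * psum γ (k-1) + 1 ≤ i →
      i ≤ vabs α + 2 * psum γ k →
      ∃ v, m i = Sum.inl v ∧ G.IsSource v ∧ G.div v = -(k : ℤ)
  edgeCount : ∀ k, 1 ≤ k →
      {e : Fin G.edges.length | G.IsInfEdge e ∧ G.weight e = k ∧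
        ∃ i ∈ Set.Icc 1 (mn α β γ δ), m i = Sum.inr e}.ncard = β k + 2 * δ k
  srcEdge : ∀ v, G.IsSource v → ∀ e, (G.tail e = v ∨ G.head e = v) →
      Xor' (∃ i ∈ Set.Icc 1 (mn α β γ δ), m i = Sum.inl v)
           (∃ i ∈ Set.Icc 1 (mn α β γ δ), m i = Sum.inr e)

/-- `{i, i+1}` is an `r`-pair. -/
def IsRPair (α γ : Vec) (n r i : ℕ) : Prop :=
  (∃ k, 1 ≤ k ∧ k ≤ vabs γ ∧ i = vabs α + 2 * k - 1) ∨
  (∃ k, 1 ≤ k ∧ k ≤ r ∧ i = n - 2 * k + 1)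

/-- Membership in `Im(𝒟,m,r)`. -/
def InIm (G : WGraph V) (α γ : Vec) (r n : ℕ)
    (m : ℕ → V ⊕ Fin G.edges.length) (a : V ⊕ Fin G.edges.length) : Prop :=
  ∃ i, IsRPair α γ n r i ∧ ¬ G.ElemAdj (m i) (m (i+1)) ∧ (a = m i ∨ a = m (i+1))

/-- The involution `ρ_{𝒟,m,r}`. -/
noncomputable def rho (G : WGraph V) (α γ : Vec) (r n : ℕ)
    (m : ℕ → V ⊕ Fin G.edges.length) (a : V ⊕ Fin G.edges.length) :
    V ⊕ Fin G.edges.length :=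
  if h : InIm G α γ r n m a then
    (if a = m (Classical.choose h) then m (Classical.choose h + 1)
     else m (Classical.choose h))
  else a

/-- Equivalence of marked (weighted, oriented) graphs. -/
def MEquiv (G : WGraph V) (m : ℕ → V ⊕ Fin G.edges.length)
    (G' : WGraph V') (m' : ℕ → V' ⊕ Fin G'.edges.length) (n : ℕ) : Prop :=
  ∃ (φ : V ≃ V') (σ : Fin G.edges.length ≃ Fin G'.edges.length),
    (∀ e, G'.tail (σ e) = φ (G.tail e)) ∧ (∀ e, G'.head (σ e) = φ (G.head e)) ∧
    (∀ e, G'.weight (σ e) = G.weight e) ∧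
    ∀ i ∈ Set.Icc 1 n, m' i = Sum.map φ σ (m i)

/-- Isomorphism of weighted oriented graphs (forgetting markings). -/
def GEquiv (G : WGraph V) (G' : WGraph V') : Prop :=
  ∃ (φ : V ≃ V') (σ : Fin G.edges.length ≃ Fin G'.edges.length),
    (∀ e, G'.tail (σ e) = φ (G.tail e)) ∧ (∀ e, G'.head (σ e) = φ (G.head e)) ∧
    (∀ e, G'.weight (σ e) = G.weight e)

/-- `(𝒟,m)` is `r`-real. -/
def IsRReal (G : WGraph V) (α β γ δ : Vec) (r : ℕ)
    (m : ℕ → V ⊕ Fin G.edges.length) : Prop :=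
  MEquiv G m G (fun i => rho G α γ r (mn α β γ δ) m (m i)) (mn α β γ δ) ∧
  ∀ k, 1 ≤ k → {e : Fin G.edges.length | G.IsInfEdge e ∧ G.weight e = k ∧
      InIm G α γ r (mn α β γ δ) m (Sum.inr e)}.ncard = 2 * δ k

/-- Complex multiplicity `μ^ℂ`. -/
noncomputable def muC (G : WGraph V) (α β γ δ : Vec) : ℚ :=
  (Iexp (2 • α + β + 4 • γ + 2 • δ))⁻¹ * ∏ e, (G.weight e : ℚ) ^ 2

/-- `r`-real multiplicity `μ^ℝ_r`. -/
noncomputable def muR (G : WGraph V) (α β γ δ : Vec) (r : ℕ)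
    (m : ℕ → V ⊕ Fin G.edges.length) : ℚ :=
  if IsRReal G α β γ δ r m ∧
      (∀ e, 2 ∣ G.weight e → InIm G α γ r (mn α β γ δ) m (Sum.inr e)) then
    (-1 : ℚ) ^ (({v : V | ¬ G.IsSource v ∧
        InIm G α γ r (mn α β γ δ) m (Sum.inl v)}.ncard) / 2)
      * (Iexp δ)⁻¹
      * ∏ e ∈ Finset.univ.filter
          (fun e => ¬ ∃ i ∈ Set.Icc 1 (mn α β γ δ - 2 * r), m i = Sum.inr e),
          (G.weight e : ℚ)
  else 0

end WGraph

/-- A bundled marked floor diagram of type `(α,β,γ,δ)`. -/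
structure BMFD (α β γ δ : Vec) : Type 1 where
  V : Type
  [fV : Fintype V]
  G : WGraph V
  m : ℕ → V ⊕ Fin G.edges.length
  marking : G.IsMarking α β γ δ m

attribute [instance] BMFD.fV

/-- Equivalence of bundled marked floor diagrams. -/
def BMFD.Equiv {α β γ δ : Vec} (X Y : BMFD α β γ δ) : Prop :=
  WGraph.MEquiv X.G X.m Y.G Y.m (mn α β γ δ)

noncomputable def BMFD.muC' {α β γ δ : Vec} (X : BMFD α β γ δ) : ℚ :=
  WGraph.muC X.G α β γ δ

noncomputable def BMFD.muR' {α β γ δ : Vec} (X : BMFD α β γ δ) (r : ℕ) : ℚ :=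
  WGraph.muR X.G α β γ δ r X.m


section AuxStmt6

variable {V : Type} [Fintype V]

lemma WGraph.div_source_eq (G : WGraph V) {v : V} (hv : G.IsSource v)
    {e : Fin G.edges.length} (he : G.tail e = v)
    (hu : ∀ e', G.tail e' = v → e' = e) :
    G.div v = -(G.weight e : ℤ) := by
  unfold WGraph.div
  have h1 : (∑ i, if G.head i = v then (G.weight i : ℤ) else 0) = 0 :=
    Finset.sum_eq_zero fun i _ => by simp [hv i]
  have h2 : (∑ i, if G.tail i = v then (G.weight i : ℤ) else 0) = (G.weight e : ℤ) := by
    rw [Finset.sum_eq_single e]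
    · simp [he]
    · intro b _ hb
      simp only [ite_eq_right_iff]
      intro hb'; exact absurd (hu b hb') hb
    · simp
  rw [h1, h2]; ring

lemma WGraph.sum_div_eq_zero (G : WGraph V) : ∑ v, G.div v = 0 := by
  unfold WGraph.div
  rw [Finset.sum_sub_distrib]
  have h1 : ∑ v, ∑ i, (if G.head i = v then (G.weight i : ℤ) else 0)
      = ∑ i, (G.weight i : ℤ) := by
    rw [Finset.sum_comm]
    exact Finset.sum_congr rfl fun i _ => by rw [Finset.sum_ite_eq]; simp
  have h2 : ∑ v, ∑ i, (if G.tail i = v then (G.weight i : ℤ) else 0)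
      = ∑ i, (G.weight i : ℤ) := by
    rw [Finset.sum_comm]
    exact Finset.sum_congr rfl fun i _ => by rw [Finset.sum_ite_eq]; simp
  rw [h1, h2, sub_self]

lemma vabs_add (a b : Vec) : vabs (a + b) = vabs a + vabs b :=
  Finsupp.sum_add_index (by simp) (by simp)

lemma sum_le_vabs (a : Vec) (t : Finset ℕ) : ∑ k ∈ t, a k ≤ vabs a := by
  unfold vabs
  rw [Finsupp.sum]
  exact Finset.sum_le_sum_of_ne_zero fun i _ hne => Finsupp.mem_support_iff.2 hne

lemma psum_le_vabs (a : Vec) (k : ℕ) : psum a k ≤ vabs a := sum_le_vabs a _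

lemma psum_succ (a : Vec) {k : ℕ} (hk : 1 ≤ k) : psum a k = psum a (k-1) + a k := by
  unfold psum
  have h : Finset.Icc 1 k = insert k (Finset.Icc 1 (k-1)) := by
    ext j; simp only [Finset.mem_Icc, Finset.mem_insert]; omega
  rw [h, Finset.sum_insert (by simp only [Finset.mem_Icc]; omega)]
  omega

lemma vI_eq_sum (a : Vec) {D : ℕ} (hD : vI a ≤ D) :
    ∑ k ∈ Finset.Icc 1 D, k * a k = vI a := by
  have hsub : a.support ⊆ insert 0 (Finset.Icc 1 D) := by
    intro i hi
    rcases Nat.eq_zero_or_pos i with h0 | h1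
    · simp [h0]
    · have hai : 1 ≤ a i := Nat.one_le_iff_ne_zero.2 (Finsupp.mem_support_iff.1 hi)
      have h2 : i * a i ≤ vI a := by
        unfold vI
        rw [Finsupp.sum]
        exact Finset.single_le_sum (f := fun i => i * a i) (fun _ _ => Nat.zero_le _) hi
      have h3 : i ≤ i * a i := Nat.le_mul_of_pos_right i hai
      simp only [Finset.mem_insert, Finset.mem_Icc]
      omega
  unfold vI
  rw [Finsupp.sum_of_support_subset a hsub _ (by simp), Finset.sum_insert (by simp)]
  simp

end AuxStmt6

/-- For a marking `m` of type `(α,β,γ,δ)` of a floor diagram, every non-source vertex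
and every edge not adjacent to a source lies in the image of `m`. -/
theorem stmt6 {V : Type} [Fintype V] (G : WGraph V) (α β γ δ : Vec)
    (m : ℕ → V ⊕ Fin G.edges.length) (hm : G.IsMarking α β γ δ m) :
    (∀ v : V, ¬ G.IsSource v → ∃ i ∈ Set.Icc 1 (mn α β γ δ), m i = Sum.inl v) ∧
    (∀ e : Fin G.edges.length, ¬ G.IsInfEdge e →
      ∃ i ∈ Set.Icc 1 (mn α β γ δ), m i = Sum.inr e) := by
  classical
  obtain ⟨hFD, hinjm, -, hsA, hsG, hecnt, hxor⟩ := hm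
  obtain ⟨⟨-, hcardV⟩, hdiv1, huniqE, hdegsum⟩ := hFD
  set d : ℕ := vI α + vI β + 2 * vI γ + 2 * vI δ with hddef
  set N : ℕ := mn α β γ δ with hN
  set S : Finset V := Finset.univ.filter G.IsSource with hS
  have hmemS : ∀ v, v ∈ S ↔ G.IsSource v := fun v => by simp [hS]
  have hEdge : ∀ v, G.IsSource v → ∃ e, G.tail e = v ∧ ∀ e', G.tail e' = v → e' = e := by
    intro v hv
    obtain ⟨e, he, hu⟩ := huniqE v hv
    exact ⟨e, he, hu⟩
  have hdivS : ∀ v, G.IsSource v → ∀ e, G.tail e = v → G.div v = -(G.weight e : ℤ) := by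
    intro v hv e he
    obtain ⟨e', he', hu'⟩ := hEdge v hv
    have hee : e = e' := hu' e he
    subst hee
    exact G.div_source_eq hv he hu'
  have hsum_src : ∑ v ∈ S, G.div v = -(d : ℤ) := by
    rw [hS, Finset.sum_filter]
    exact hdegsum
  have htotal0 : ∑ v, G.div v = 0 := G.sum_div_eq_zero
  have hnonsrc_card : ((Finset.univ.filter (fun v => ¬ G.IsSource v)).card : ℤ) = (d : ℤ) := by
    have hsplit := Finset.sum_filter_add_sum_filter_not Finset.univ G.IsSource G.div
    rw [htotal0] at hsplit
    have h2 : ∑ v ∈ Finset.univ.filter (fun v => ¬ G.IsSource v), G.div v = (d : ℤ) := by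
      have h1 := hsum_src
      rw [hS] at h1
      linarith
    have h3 : ∑ v ∈ Finset.univ.filter (fun v => ¬ G.IsSource v), G.div v
        = ((Finset.univ.filter (fun v => ¬ G.IsSource v)).card : ℤ) := by
      rw [Finset.sum_congr rfl (fun v hv => hdiv1 v (by simpa using hv))]
      simp
    rw [h3] at h2
    exact h2
  have hcardV' : Fintype.card V = d + S.card := by
    have h := Finset.card_filter_add_card_filter_not
      (s := (Finset.univ : Finset V)) (p := G.IsSource)
    have hns : (Finset.univ.filter (fun v => ¬ G.IsSource v)).card = d := by
      exact_mod_cast hnonsrc_card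
    rw [Finset.card_univ, ← hS] at h
    omega
  have hlen : G.edges.length + 1 = d + S.card := by omega
  have hheadns : ∀ e, ¬ G.IsSource (G.head e) := fun e h => h e rfl
  have hinf_iff : ∀ e, G.IsInfEdge e ↔ G.IsSource (G.tail e) := by
    intro e
    constructor
    · rintro (h | h)
      · exact h
      · exact absurd h (hheadns e)
    · exact Or.inl
  set IE : Finset (Fin G.edges.length) := Finset.univ.filter G.IsInfEdge with hIE
  have hmemIE : ∀ e, e ∈ IE ↔ G.IsSource (G.tail e) := fun e => by
    rw [hIE, Finset.mem_filter]
    simp [hinf_iff e]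
  have htail_inj : ∀ e ∈ IE, ∀ e' ∈ IE, G.tail e = G.tail e' → e = e' := by
    intro e he e' he' hEq
    have hs : G.IsSource (G.tail e) := (hmemIE e).1 he
    obtain ⟨f, hf, hu⟩ := hEdge _ hs
    rw [hu e rfl, hu e' hEq.symm]
  have hIEcard : IE.card = S.card := by
    apply Finset.card_bij (fun e _ => G.tail e)
    · intro e he
      exact (hmemS _).2 ((hmemIE e).1 he)
    · intro e he e' he' h
      exact htail_inj e he e' he' h
    · intro v hv
      obtain ⟨e, he, -⟩ := hEdge v ((hmemS v).1 hv)
      exact ⟨e, (hmemIE e).2 (by rw [he]; exact (hmemS v).1 hv), he⟩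
  have hd1 : 1 ≤ d := by
    by_contra hcon
    have h1 : IE.card ≤ G.edges.length :=
      le_trans (Finset.card_le_univ IE) (by simp)
    omega
  have hVne : Nonempty V := by
    rw [← Fintype.card_pos_iff]
    omega
  obtain ⟨v₀⟩ := hVne
  have hNval : N = 2 * d - 1 + (vabs α + vabs β + 2 * vabs γ + 2 * vabs δ) := by
    rw [hN]
    unfold mn
    rw [← hddef]
    congr 1
    rw [two_smul, two_smul, vabs_add, vabs_add, vabs_add, vabs_add, vabs_add]
    ring
  set I : Finset (V ⊕ Fin G.edges.length) := (Finset.Icc 1 N).image m with hI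
  have hIcard : I.card = N := by
    rw [hI, Finset.card_image_of_injOn]
    · rw [Nat.card_Icc]; omega
    · rw [Finset.coe_Icc]; exact hinjm
  have hmemI : ∀ a, a ∈ I ↔ ∃ i ∈ Set.Icc 1 N, m i = a := by
    intro a
    rw [hI, Finset.mem_image]
    constructor
    · rintro ⟨i, hi, rfl⟩
      rw [Finset.mem_Icc] at hi
      exact ⟨i, Set.mem_Icc.2 hi, rfl⟩
    · rintro ⟨i, hi, rfl⟩
      rw [Set.mem_Icc] at hi
      exact ⟨i, Finset.mem_Icc.2 hi, rfl⟩
  set A' : Finset V := S.filter (fun v => Sum.inl v ∈ I) with hA'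
  set B' : Finset (Fin G.edges.length) := IE.filter (fun e => Sum.inr e ∈ I) with hB'
  have hB'card : B'.card = (S.filter (fun v => Sum.inl v ∉ I)).card := by
    apply Finset.card_bij (fun e _ => G.tail e)
    · intro e he
      rw [hB', Finset.mem_filter] at he
      obtain ⟨heIE, heI⟩ := he
      have hsrc : G.IsSource (G.tail e) := (hmemIE e).1 heIE
      rw [Finset.mem_filter]
      refine ⟨(hmemS _).2 hsrc, ?_⟩
      intro hcon
      rcases hxor (G.tail e) hsrc e (Or.inl rfl) with ⟨ha, hb⟩ | ⟨hb, ha⟩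
      · exact hb ((hmemI _).1 heI)
      · exact ha ((hmemI _).1 hcon)
    · intro e he e' he' h
      rw [hB', Finset.mem_filter] at he he'
      exact htail_inj e he.1 e' he'.1 h
    · intro v hv
      rw [Finset.mem_filter] at hv
      obtain ⟨hvS, hvnot⟩ := hv
      obtain ⟨e, he, -⟩ := hEdge v ((hmemS v).1 hvS)
      have heIE : e ∈ IE := (hmemIE e).2 (by rw [he]; exact (hmemS v).1 hvS)
      have heI : Sum.inr e ∈ I := by
        rcases hxor v ((hmemS v).1 hvS) e (Or.inl he) with ⟨ha, hb⟩ | ⟨hb, ha⟩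
        · exact absurd ((hmemI _).2 ha) hvnot
        · exact (hmemI _).2 hb
      exact ⟨e, by rw [hB', Finset.mem_filter]; exact ⟨heIE, heI⟩, he⟩
  set U : Finset (V ⊕ Fin G.edges.length) := S.image Sum.inl ∪ IE.image Sum.inr with hU
  have hdisjU : Disjoint (S.image Sum.inl) (IE.image Sum.inr) := by
    rw [Finset.disjoint_left]
    rintro a ha hb
    obtain ⟨v, -, rfl⟩ := Finset.mem_image.1 ha
    obtain ⟨e, -, h⟩ := Finset.mem_image.1 hb
    exact Sum.inr_ne_inl h
  have hUcard : U.card = 2 * S.card := by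
    rw [hU, Finset.card_union_of_disjoint hdisjU,
      Finset.card_image_of_injective _ Sum.inl_injective,
      Finset.card_image_of_injective _ Sum.inr_injective, hIEcard]
    omega
  have hIU1 : (I ∩ S.image Sum.inl) = A'.image Sum.inl := by
    ext a
    simp only [Finset.mem_inter, Finset.mem_image, hA', Finset.mem_filter]
    constructor
    · rintro ⟨haI, v, hvS, rfl⟩
      exact ⟨v, ⟨hvS, haI⟩, rfl⟩
    · rintro ⟨v, ⟨hvS, hvI⟩, rfl⟩
      exact ⟨hvI, v, hvS, rfl⟩
  have hIU2 : (I ∩ IE.image Sum.inr) = B'.image Sum.inr := by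
    ext a
    simp only [Finset.mem_inter, Finset.mem_image, hB', Finset.mem_filter]
    constructor
    · rintro ⟨haI, e, heIE, rfl⟩
      exact ⟨e, ⟨heIE, haI⟩, rfl⟩
    · rintro ⟨e, ⟨heIE, heI⟩, rfl⟩
      exact ⟨heI, e, heIE, rfl⟩
  have hIUcard : (I ∩ U).card = S.card := by
    rw [hU, Finset.inter_union_distrib_left,
      Finset.card_union_of_disjoint
        (Disjoint.mono Finset.inter_subset_right Finset.inter_subset_right hdisjU),
      hIU1, hIU2, Finset.card_image_of_injective _ Sum.inl_injective,
      Finset.card_image_of_injective _ Sum.inr_injective, hB'card]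
    have h := Finset.card_filter_add_card_filter_not
      (s := S) (p := fun v => Sum.inl v ∈ I)
    rw [← hA'] at h
    exact h
  have htotalcard : Fintype.card (V ⊕ Fin G.edges.length) = 2 * d - 1 + 2 * S.card := by
    rw [Fintype.card_sum, Fintype.card_fin]
    omega
  set R : Finset (V ⊕ Fin G.edges.length) := Finset.univ \ U with hR
  have hRcard : R.card = 2 * d - 1 := by
    rw [hR, Finset.card_sdiff_of_subset (Finset.subset_univ U), Finset.card_univ, htotalcard, hUcard]
    omega
  -- the weight function on sources
  set g : V → ℕ := fun v => (-G.div v).toNat with hg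
  have hgspec : ∀ v, G.IsSource v → G.div v = -(g v : ℤ) ∧ 1 ≤ g v := by
    intro v hv
    obtain ⟨e, he, -⟩ := hEdge v hv
    have hdv := hdivS v hv e he
    have hw := G.weight_pos e
    constructor
    · simp only [hg]
      omega
    · simp only [hg]
      rw [hdv]
      omega
  have hsumg : ∑ v ∈ S, (g v : ℤ) = (d : ℤ) := by
    have h1 : ∑ v ∈ S, (g v : ℤ) = ∑ v ∈ S, (-G.div v) := by
      refine Finset.sum_congr rfl fun v hv => ?_
      have h2 := (hgspec v ((hmemS v).1 hv)).1
      omega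
    rw [h1, Finset.sum_neg_distrib, hsum_src, neg_neg]
  have hgle : ∀ v ∈ S, g v ≤ d := by
    intro v hv
    have h1 : (g v : ℤ) ≤ (d : ℤ) := by
      rw [← hsumg]
      exact Finset.single_le_sum (f := fun u => (g u : ℤ)) (fun u _ => Int.natCast_nonneg (g u)) hv
    exact_mod_cast h1
  have hmaps : ∀ v ∈ S, g v ∈ Finset.Icc 1 d := fun v hv =>
    Finset.mem_Icc.2 ⟨(hgspec v ((hmemS v).1 hv)).2, hgle v hv⟩
  have hscard : S.card = ∑ k ∈ Finset.Icc 1 d, (S.filter (fun v => g v = k)).card :=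
    Finset.card_eq_sum_card_fiberwise hmaps
  have hgd : ∑ v ∈ S, g v = d := by exact_mod_cast hsumg
  have hdt : ∑ k ∈ Finset.Icc 1 d, k * (S.filter (fun v => g v = k)).card = d := by
    have h := Finset.sum_fiberwise_of_maps_to hmaps g
    have h2 : ∀ k ∈ Finset.Icc 1 d, ∑ v ∈ S.filter (fun v => g v = k), g v
        = k * (S.filter (fun v => g v = k)).card := by
      intro k hk
      rw [Finset.sum_congr rfl (fun v hv => (Finset.mem_filter.1 hv).2),
        Finset.sum_const, smul_eq_mul]
      ring
    rw [Finset.sum_congr rfl h2] at h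
    rw [h, hgd]
  -- lower bound on the number of sources of each weight
  have hck : ∀ k, 1 ≤ k →
      α k + 2 * γ k + (β k + 2 * δ k) ≤ (S.filter (fun v => g v = k)).card := by
    intro k hk1
    set Sk := S.filter (fun v => g v = k) with hSk
    have hmemSk : ∀ v, v ∈ Sk ↔ (G.IsSource v ∧ G.div v = -(k : ℤ)) := by
      intro v
      rw [hSk, Finset.mem_filter]
      constructor
      · rintro ⟨hvS, hgv⟩
        have hsp := hgspec v ((hmemS v).1 hvS)
        exact ⟨(hmemS v).1 hvS, by rw [hsp.1, hgv]⟩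
      · rintro ⟨hvsrc, hdv⟩
        have hsp := hgspec v hvsrc
        refine ⟨(hmemS v).2 hvsrc, ?_⟩
        have h3 : -(g v : ℤ) = -(k : ℤ) := by rw [← hsp.1, hdv]
        omega
    have hpa := psum_le_vabs α k
    have hpa' := psum_le_vabs α (k-1)
    have hpg := psum_le_vabs γ k
    have hpg' := psum_le_vabs γ (k-1)
    set T1 := Sk.filter (fun v => ∃ i, i ∈ Finset.Icc 1 (vabs α) ∧ m i = Sum.inl v) with hT1
    set T2 := Sk.filter (fun v => ∃ i, i ∈ Finset.Icc (vabs α + 1) (vabs α + 2 * vabs γ)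
      ∧ m i = Sum.inl v) with hT2
    set T3 := Sk.filter (fun v => ∃ e, G.tail e = v
      ∧ (∃ i ∈ Set.Icc 1 N, m i = Sum.inr e)) with hT3
    have hcT1 : α k ≤ T1.card := by
      have hcard : (Finset.Icc (psum α (k-1) + 1) (psum α k)).card = α k := by
        rw [Nat.card_Icc]
        have := psum_succ α hk1
        omega
      rw [← hcard]
      apply Finset.card_le_card_of_injOn
        (fun i => if h : psum α (k-1) + 1 ≤ i ∧ i ≤ psum α k
          then Classical.choose (hsA k hk1 i h.1 h.2) else v₀)
      · intro i hi
        rw [Finset.mem_coe, Finset.mem_Icc] at hi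
        simp only [dif_pos hi]
        obtain ⟨hmi, hsrc, hdiv⟩ := Classical.choose_spec (hsA k hk1 i hi.1 hi.2)
        simp only [hT1, Finset.mem_coe, Finset.mem_filter]
        exact ⟨(hmemSk _).2 ⟨hsrc, hdiv⟩, i, Finset.mem_Icc.2 ⟨by omega, by omega⟩, hmi⟩
      · intro i hi j hj hEq
        simp only [Finset.coe_Icc, Set.mem_Icc] at hi hj
        simp only [dif_pos hi, dif_pos hj] at hEq
        obtain ⟨hmi, -, -⟩ := Classical.choose_spec (hsA k hk1 i hi.1 hi.2)
        obtain ⟨hmj, -, -⟩ := Classical.choose_spec (hsA k hk1 j hj.1 hj.2)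
        apply hinjm (Set.mem_Icc.2 ⟨by omega, by omega⟩) (Set.mem_Icc.2 ⟨by omega, by omega⟩)
        rw [hmi, hmj, hEq]
    have hcT2 : 2 * γ k ≤ T2.card := by
      have hcard : (Finset.Icc (vabs α + 2 * psum γ (k-1) + 1)
          (vabs α + 2 * psum γ k)).card = 2 * γ k := by
        rw [Nat.card_Icc]
        have := psum_succ γ hk1
        omega
      rw [← hcard]
      apply Finset.card_le_card_of_injOn
        (fun i => if h : vabs α + 2 * psum γ (k-1) + 1 ≤ i ∧ i ≤ vabs α + 2 * psum γ k
          then Classical.choose (hsG k hk1 i h.1 h.2) else v₀)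
      · intro i hi
        rw [Finset.mem_coe, Finset.mem_Icc] at hi
        simp only [dif_pos hi]
        obtain ⟨hmi, hsrc, hdiv⟩ := Classical.choose_spec (hsG k hk1 i hi.1 hi.2)
        simp only [hT2, Finset.mem_coe, Finset.mem_filter]
        exact ⟨(hmemSk _).2 ⟨hsrc, hdiv⟩, i, Finset.mem_Icc.2 ⟨by omega, by omega⟩, hmi⟩
      · intro i hi j hj hEq
        simp only [Finset.coe_Icc, Set.mem_Icc] at hi hj
        simp only [dif_pos hi, dif_pos hj] at hEq
        obtain ⟨hmi, -, -⟩ := Classical.choose_spec (hsG k hk1 i hi.1 hi.2)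
        obtain ⟨hmj, -, -⟩ := Classical.choose_spec (hsG k hk1 j hj.1 hj.2)
        apply hinjm (Set.mem_Icc.2 ⟨by omega, by omega⟩) (Set.mem_Icc.2 ⟨by omega, by omega⟩)
        rw [hmi, hmj, hEq]
    have hcT3 : β k + 2 * δ k ≤ T3.card := by
      set Ek : Set (Fin G.edges.length) := {e | G.IsInfEdge e ∧ G.weight e = k
        ∧ ∃ i ∈ Set.Icc 1 N, m i = Sum.inr e} with hEk
      have hfin : Ek.Finite := Set.toFinite _
      have hec : Ek.ncard = β k + 2 * δ k := hecnt k hk1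
      rw [Set.ncard_eq_toFinset_card Ek hfin] at hec
      rw [← hec]
      apply Finset.card_le_card_of_injOn (fun e => G.tail e)
      · intro e he
        rw [Finset.mem_coe, Set.Finite.mem_toFinset] at he
        obtain ⟨hinf, hwk, hmark⟩ := he
        have hsrc : G.IsSource (G.tail e) := (hinf_iff e).1 hinf
        simp only [hT3, Finset.mem_coe, Finset.mem_filter]
        refine ⟨(hmemSk _).2 ⟨hsrc, ?_⟩, e, rfl, hmark⟩
        rw [hdivS _ hsrc e rfl, hwk]
      · intro e he e' he' h
        rw [Set.Finite.coe_toFinset] at he he'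
        exact htail_inj e ((hmemIE e).2 ((hinf_iff e).1 he.1))
          e' ((hmemIE e').2 ((hinf_iff e').1 he'.1)) h
    have hd12 : Disjoint T1 T2 := by
      rw [Finset.disjoint_left]
      intro v hv1 hv2
      simp only [hT1, Finset.mem_filter] at hv1
      simp only [hT2, Finset.mem_filter] at hv2
      obtain ⟨-, i, hi, hmi⟩ := hv1
      obtain ⟨-, j, hj, hmj⟩ := hv2
      rw [Finset.mem_Icc] at hi hj
      have hij : i = j := hinjm (Set.mem_Icc.2 ⟨by omega, by omega⟩)
        (Set.mem_Icc.2 ⟨by omega, by omega⟩) (by rw [hmi, hmj])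
      omega
    have hd13 : Disjoint (T1 ∪ T2) T3 := by
      rw [Finset.disjoint_left]
      intro v hv12 hv3
      simp only [hT3, Finset.mem_filter] at hv3
      obtain ⟨hvSk, e, hte, hmark⟩ := hv3
      have hsrc : G.IsSource v := ((hmemSk v).1 hvSk).1
      have hvI : ∃ i ∈ Set.Icc 1 N, m i = Sum.inl v := by
        rcases Finset.mem_union.1 hv12 with h | h
        · simp only [hT1, Finset.mem_filter] at h
          obtain ⟨-, i, hi, hmi⟩ := h
          rw [Finset.mem_Icc] at hi
          exact ⟨i, Set.mem_Icc.2 ⟨by omega, by omega⟩, hmi⟩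
        · simp only [hT2, Finset.mem_filter] at h
          obtain ⟨-, i, hi, hmi⟩ := h
          rw [Finset.mem_Icc] at hi
          exact ⟨i, Set.mem_Icc.2 ⟨by omega, by omega⟩, hmi⟩
      rcases hxor v hsrc e (Or.inl hte) with ⟨-, hb⟩ | ⟨-, ha⟩
      · exact hb hmark
      · exact ha hvI
    have hsub : T1 ∪ T2 ∪ T3 ⊆ Sk := by
      intro v hv
      rcases Finset.mem_union.1 hv with h | h
      · rcases Finset.mem_union.1 h with h | h
        · simp only [hT1, Finset.mem_filter] at h
          exact h.1
        · simp only [hT2, Finset.mem_filter] at h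
          exact h.1
      · simp only [hT3, Finset.mem_filter] at h
        exact h.1
    have hcup : (T1 ∪ T2 ∪ T3).card = T1.card + T2.card + T3.card := by
      rw [Finset.card_union_of_disjoint hd13, Finset.card_union_of_disjoint hd12]
    have hle := Finset.card_le_card hsub
    omega
  -- the key bound on the number of sources
  have hsle : S.card ≤ vabs α + vabs β + 2 * vabs γ + 2 * vabs δ := by
    have hle : ∀ k ∈ Finset.Icc 1 d,
        k * (α k + 2 * γ k + (β k + 2 * δ k)) ≤ k * (S.filter (fun v => g v = k)).card :=
      fun k hk => Nat.mul_le_mul_left k (hck k (Finset.mem_Icc.1 hk).1)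
    have h1 := vI_eq_sum α (show vI α ≤ d by omega)
    have h2 := vI_eq_sum β (show vI β ≤ d by omega)
    have h3 := vI_eq_sum γ (show vI γ ≤ d by omega)
    have h4 := vI_eq_sum δ (show vI δ ≤ d by omega)
    have hsum1 : ∑ k ∈ Finset.Icc 1 d, k * (α k + 2 * γ k + (β k + 2 * δ k)) = d := by
      have he1 : ∑ k ∈ Finset.Icc 1 d, k * (α k + 2 * γ k + (β k + 2 * δ k))
          = (∑ k ∈ Finset.Icc 1 d, k * α k) + 2 * (∑ k ∈ Finset.Icc 1 d, k * γ k)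
            + ((∑ k ∈ Finset.Icc 1 d, k * β k) + 2 * (∑ k ∈ Finset.Icc 1 d, k * δ k)) := by
        rw [Finset.mul_sum, Finset.mul_sum, ← Finset.sum_add_distrib,
          ← Finset.sum_add_distrib, ← Finset.sum_add_distrib]
        exact Finset.sum_congr rfl fun k _ => by ring
      rw [he1, h1, h2, h3, h4]
      omega
    have heqsum : ∑ k ∈ Finset.Icc 1 d, k * (α k + 2 * γ k + (β k + 2 * δ k))
        = ∑ k ∈ Finset.Icc 1 d, k * (S.filter (fun v => g v = k)).card := by
      rw [hsum1, hdt]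
    have heq := (Finset.sum_eq_sum_iff_of_le hle).1 heqsum
    have hct : ∀ k ∈ Finset.Icc 1 d,
        (S.filter (fun v => g v = k)).card = α k + 2 * γ k + (β k + 2 * δ k) := by
      intro k hk
      have h := (heq k hk).symm
      have hk1 : 1 ≤ k := (Finset.mem_Icc.1 hk).1
      exact Nat.eq_of_mul_eq_mul_left (by omega) h
    have he2 : ∑ k ∈ Finset.Icc 1 d, (α k + 2 * γ k + (β k + 2 * δ k))
        = (∑ k ∈ Finset.Icc 1 d, α k) + 2 * (∑ k ∈ Finset.Icc 1 d, γ k)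
          + ((∑ k ∈ Finset.Icc 1 d, β k) + 2 * (∑ k ∈ Finset.Icc 1 d, δ k)) := by
      rw [Finset.mul_sum, Finset.mul_sum, ← Finset.sum_add_distrib,
        ← Finset.sum_add_distrib, ← Finset.sum_add_distrib]
    have ha1 := sum_le_vabs α (Finset.Icc 1 d)
    have ha2 := sum_le_vabs β (Finset.Icc 1 d)
    have ha3 := sum_le_vabs γ (Finset.Icc 1 d)
    have ha4 := sum_le_vabs δ (Finset.Icc 1 d)
    have hfin : S.card = ∑ k ∈ Finset.Icc 1 d, (α k + 2 * γ k + (β k + 2 * δ k)) := by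
      rw [hscard]
      exact Finset.sum_congr rfl hct
    omega
  -- final counting
  have hsplit := Finset.card_inter_add_card_sdiff I U
  have hRsub : I \ U ⊆ R :=
    Finset.sdiff_subset_sdiff (Finset.subset_univ I) subset_rfl
  have hReq : I \ U = R := Finset.eq_of_subset_of_card_le hRsub (by omega)
  constructor
  · intro v hv
    have hmemR : Sum.inl v ∈ R := by
      rw [hR, Finset.mem_sdiff]
      refine ⟨Finset.mem_univ _, ?_⟩
      rw [hU, Finset.mem_union]
      rintro (h | h)
      · obtain ⟨u, hu, huv⟩ := Finset.mem_image.1 h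
        have huv' : u = v := Sum.inl_injective huv
        subst huv'
        exact hv ((hmemS _).1 hu)
      · obtain ⟨e, -, he⟩ := Finset.mem_image.1 h
        exact Sum.inr_ne_inl he
    rw [← hReq] at hmemR
    exact (hmemI _).1 (Finset.mem_sdiff.1 hmemR).1
  · intro e he
    have hmemR : Sum.inr e ∈ R := by
      rw [hR, Finset.mem_sdiff]
      refine ⟨Finset.mem_univ _, ?_⟩
      rw [hU, Finset.mem_union]
      rintro (h | h)
      · obtain ⟨u, -, hu⟩ := Finset.mem_image.1 h
        exact Sum.inl_ne_inr hu
      · obtain ⟨e', he', hee⟩ := Finset.mem_image.1 h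
        have hee' : e' = e := Sum.inr_injective hee
        subst hee'
        exact he ((by simpa [hIE] using he') : G.IsInfEdge e')
    rw [← hReq] at hmemR
    exact (hmemI _).1 (Finset.mem_sdiff.1 hmemR).1
end

section
/- For any d ≥ 1, the genus 0 Gromov–Witten invariant N_2(d) of ℂP² is divisible by 2^{⌊(d−1)/2⌋}. -/
/-- For any sequence `N₂ : ℕ → ℤ` satisfying `N₂(1) = 1` and Kontsevich's recursion
`N₂(d) = Σ_{d₁+d₂=d, d₁,d₂ ≥ 1} N₂(d₁)N₂(d₂)(d₁²d₂² C(3d−4,3d₁−2) − d₁³d₂ C(3d−4,3d₁−1))`,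
the number `N₂(d)` is divisible by `2^⌊(d−1)/2⌋` for every `d ≥ 1`. -/
theorem stmt13 (N : ℕ → ℤ) (hinit : N 1 = 1)
    (hrec : ∀ d, 2 ≤ d →
      N d = ∑ d₁ ∈ Finset.Ioo 0 d,
        N d₁ * N (d - d₁) *
          ((d₁ : ℤ) ^ 2 * ((d - d₁ : ℕ) : ℤ) ^ 2 * (Nat.choose (3 * d - 4) (3 * d₁ - 2) : ℤ)
            - (d₁ : ℤ) ^ 3 * ((d - d₁ : ℕ) : ℤ) * (Nat.choose (3 * d - 4) (3 * d₁ - 1) : ℤ))) :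
    ∀ d, 1 ≤ d → (2 : ℤ) ^ ((d - 1) / 2) ∣ N d := by
  intro d
  induction d using Nat.strong_induction_on with
  | _ d ih =>
    intro hd
    rcases eq_or_lt_of_le hd with h1 | h2
    · rw [← h1]; simpa using one_dvd _
    · rw [hrec d h2]
      apply Finset.dvd_sum
      intro d₁ hd₁
      rw [Finset.mem_Ioo] at hd₁
      obtain ⟨h0, hlt⟩ := hd₁
      set d₂ := d - d₁ with hd2
      have hsum : d₁ + d₂ = d := by omega
      have hd₂1 : 1 ≤ d₂ := by omega
      have hA : (2:ℤ)^((d₁-1)/2) ∣ N d₁ := ih d₁ hlt h0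
      have hB : (2:ℤ)^((d₂-1)/2) ∣ N d₂ := ih d₂ (by omega) hd₂1
      set C₁ : ℤ := (Nat.choose (3 * d - 4) (3 * d₁ - 2) : ℤ)
      set C₂ : ℤ := (Nat.choose (3 * d - 4) (3 * d₁ - 1) : ℤ)
      by_cases hpar : d₁ % 2 = 1 ∧ d₂ % 2 = 1
      · have hle : (d-1)/2 ≤ (d₁-1)/2 + (d₂-1)/2 := by omega
        have : (2:ℤ)^((d-1)/2) ∣ N d₁ * N d₂ := by
          calc (2:ℤ)^((d-1)/2) ∣ (2:ℤ)^((d₁-1)/2 + (d₂-1)/2) := pow_dvd_pow 2 hle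
            _ = 2^((d₁-1)/2) * 2^((d₂-1)/2) := pow_add 2 _ _
            _ ∣ N d₁ * N d₂ := mul_dvd_mul hA hB
        exact this.mul_right _
      · have hev : (2:ℤ) ∣ (d₁:ℤ) ∨ (2:ℤ) ∣ (d₂:ℤ) := by
          have : (2:ℕ) ∣ d₁ ∨ (2:ℕ) ∣ d₂ := by omega
          rcases this with h | h
          · exact Or.inl (Int.natCast_dvd_natCast.mpr h)
          · exact Or.inr (Int.natCast_dvd_natCast.mpr h)
        have hbr : (2:ℤ) ∣ ((d₁:ℤ)^2 * (d₂:ℤ)^2 * C₁ - (d₁:ℤ)^3 * (d₂:ℤ) * C₂) := by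
          rcases hev with ⟨k, hk⟩ | ⟨k, hk⟩
          · exact ⟨2*k^2*(d₂:ℤ)^2*C₁ - 4*k^3*(d₂:ℤ)*C₂, by rw [hk]; ring⟩
          · exact ⟨2*(d₁:ℤ)^2*k^2*C₁ - (d₁:ℤ)^3*k*C₂, by rw [hk]; ring⟩
        have hle : (d-1)/2 ≤ (d₁-1)/2 + (d₂-1)/2 + 1 := by omega
        calc (2:ℤ)^((d-1)/2) ∣ (2:ℤ)^((d₁-1)/2 + (d₂-1)/2 + 1) := pow_dvd_pow 2 hle
          _ = 2^((d₁-1)/2) * 2^((d₂-1)/2) * 2 := by rw [pow_add, pow_add, pow_one]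
          _ ∣ N d₁ * N d₂ * ((d₁:ℤ)^2 * (d₂:ℤ)^2 * C₁ - (d₁:ℤ)^3 * (d₂:ℤ) * C₂) :=
              mul_dvd_mul (mul_dvd_mul hA hB) hbr
end
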